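/- In the polynomial ring over the rationals in indeterminates X_1,…,X_ℓ, b_1,…,b_ℓ, q, the identity ∑_{k=0}^{ℓ} q^{ℓ(ℓ+1)/2 − k(k+1)/2} ∑_{I={i_1<…<i_k}⊆{1,…,ℓ}} (∏_{r∉I} b_r) · (X_{i_1} − q^{k−1+i_1} b_{i_1})(X_{i_2} − q^{k−2+i_2} b_{i_2}) ⋯ (X_{i_k} − q^{i_k} b_{i_k}) = X_1 X_2 ⋯ X_ℓ holds. -/

import Mathlib

open MvPolynomial

lemma tri_succ (n : ℕ) : (n+1)*((n+1)+1)/2 = n*(n+1)/2 + (n+1) := by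
  obtain ⟨c, hc⟩ := Nat.even_mul_succ_self n
  have h2 : (n+1)*((n+1)+1) = c + c + 2*(n+1) := by rw [← hc]; ring
  omega

lemma tri_mono {k n : ℕ} (h : k ≤ n) : k*(k+1)/2 ≤ n*(n+1)/2 :=
  Nat.div_le_div_right (Nat.mul_le_mul h (by omega))

lemma key {ι : Type*} [LinearOrder ι] {R : Type*} [CommRing R] (q : R) (X : ι → R)
    (s : Finset ι) : ∀ b : ι → R,
    ∑ I ∈ s.powerset, q ^ (s.card * (s.card + 1) / 2 - I.card * (I.card + 1) / 2) *
      ((∏ r ∈ s \ I, b r) *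
        ∏ i ∈ I, (X i - q ^ ((I.filter (fun x => i < x)).card
          + (s.filter (fun x => x ≤ i)).card) * b i))
    = ∏ i ∈ s, X i := by
  classical
  induction s using Finset.induction_on_max with
  | empty => simp
  | insert a s hmax IH =>
    intro b
    have ha : a ∉ s := fun h => lt_irrefl a (hmax a h)
    have hcard : (insert a s).card = s.card + 1 := Finset.card_insert_of_notMem ha
    rw [Finset.sum_powerset_insert ha]
    have hfiltle : ∀ i ∈ s, (insert a s).filter (fun x => x ≤ i) = s.filter (fun x => x ≤ i) := by
      intro i hi
      rw [Finset.filter_insert, if_neg (not_le.mpr (hmax i hi))]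
    have h1 : ∑ I ∈ s.powerset,
        q ^ ((insert a s).card * ((insert a s).card + 1) / 2 - I.card * (I.card + 1) / 2) *
          ((∏ r ∈ insert a s \ I, b r) *
            ∏ i ∈ I, (X i - q ^ ((I.filter (fun x => i < x)).card
              + ((insert a s).filter (fun x => x ≤ i)).card) * b i))
        = q ^ (s.card + 1) * b a * ∏ i ∈ s, X i := by
      rw [← IH b, Finset.mul_sum]
      apply Finset.sum_congr rfl
      intro I hI
      rw [Finset.mem_powerset] at hI
      have hk : I.card ≤ s.card := Finset.card_le_card hI
      have hsd : insert a s \ I = insert a (s \ I) := by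
        ext x; simp only [Finset.mem_sdiff, Finset.mem_insert]
        constructor
        · rintro ⟨h1 | h1, h2⟩ <;> tauto
        · rintro (rfl | ⟨h1, h2⟩) <;> tauto
      have hexp : (insert a s).card * ((insert a s).card + 1) / 2 - I.card * (I.card + 1) / 2
          = (s.card + 1) + (s.card * (s.card + 1) / 2 - I.card * (I.card + 1) / 2) := by
        rw [hcard, tri_succ]
        have := tri_mono hk
        omega
      have hpI : ∏ i ∈ I, (X i - q ^ ((I.filter (fun x => i < x)).card
              + ((insert a s).filter (fun x => x ≤ i)).card) * b i)
          = ∏ i ∈ I, (X i - q ^ ((I.filter (fun x => i < x)).card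
              + (s.filter (fun x => x ≤ i)).card) * b i) :=
        Finset.prod_congr rfl (fun i hi => by rw [hfiltle i (hI hi)])
      rw [hexp, hsd, hpI, Finset.prod_insert (fun h => ha (Finset.mem_sdiff.mp h).1), pow_add]
      ring
    have h2 : ∑ I ∈ s.powerset,
        q ^ ((insert a s).card * ((insert a s).card + 1) / 2
            - (insert a I).card * ((insert a I).card + 1) / 2) *
          ((∏ r ∈ insert a s \ insert a I, b r) *
            ∏ i ∈ insert a I, (X i - q ^ (((insert a I).filter (fun x => i < x)).card
              + ((insert a s).filter (fun x => x ≤ i)).card) * b i))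
        = (X a - q ^ (s.card + 1) * b a) * ∏ i ∈ s, X i := by
      rw [← IH (fun i => q * b i), Finset.mul_sum]
      apply Finset.sum_congr rfl
      intro I hI
      rw [Finset.mem_powerset] at hI
      have hk : I.card ≤ s.card := Finset.card_le_card hI
      have haI : a ∉ I := fun h => ha (hI h)
      have hIcard : (insert a I).card = I.card + 1 := Finset.card_insert_of_notMem haI
      have hsd : insert a s \ insert a I = s \ I := by
        ext x; simp only [Finset.mem_sdiff, Finset.mem_insert, not_or]
        constructor
        · rintro ⟨h1 | h1, h2, h3⟩ <;> tauto
        · rintro ⟨h1, h2⟩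
          exact ⟨Or.inr h1, fun h => ha (h ▸ h1), h2⟩
      have hexp : (insert a s).card * ((insert a s).card + 1) / 2
            - (insert a I).card * ((insert a I).card + 1) / 2
          = (s.card - I.card) + (s.card * (s.card + 1) / 2 - I.card * (I.card + 1) / 2) := by
        rw [hcard, hIcard, tri_succ, tri_succ]
        have := tri_mono hk
        omega
      have hfa : ((insert a I).filter (fun x => a < x)) = ∅ := by
        rw [Finset.filter_insert, if_neg (lt_irrefl a), Finset.filter_eq_empty_iff]
        exact fun x hx => not_lt.mpr (le_of_lt (hmax x (hI hx)))
      have hwa : ((insert a s).filter (fun x => x ≤ a)) = insert a s := by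
        rw [Finset.filter_eq_self]
        intro x hx
        rcases Finset.mem_insert.mp hx with rfl | hx
        · exact le_refl x
        · exact le_of_lt (hmax x hx)
      have hprodI : ∏ i ∈ insert a I, (X i - q ^ (((insert a I).filter (fun x => i < x)).card
              + ((insert a s).filter (fun x => x ≤ i)).card) * b i)
          = (X a - q ^ (s.card + 1) * b a) *
            ∏ i ∈ I, (X i - q ^ ((I.filter (fun x => i < x)).card
              + (s.filter (fun x => x ≤ i)).card) * (q * b i)) := by
        rw [Finset.prod_insert haI, hfa, hwa, hcard]
        simp only [Finset.card_empty, Nat.zero_add]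
        congr 1
        apply Finset.prod_congr rfl
        intro i hi
        have hia : i < a := hmax i (hI hi)
        have hfi : (insert a I).filter (fun x => i < x)
            = insert a (I.filter (fun x => i < x)) := by
          rw [Finset.filter_insert, if_pos hia]
        rw [hfi, Finset.card_insert_of_notMem (fun h => haI (Finset.mem_filter.mp h).1),
          hfiltle i (hI hi),
          show (I.filter (fun x => i < x)).card + 1 + (s.filter (fun x => x ≤ i)).card
            = ((I.filter (fun x => i < x)).card + (s.filter (fun x => x ≤ i)).card) + 1 from by
              ring,
          pow_succ]
        ring
      have hbd : (∏ r ∈ s \ I, (q * b r)) = q ^ (s.card - I.card) * ∏ r ∈ s \ I, b r := by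
        rw [Finset.prod_mul_distrib, Finset.prod_const, Finset.card_sdiff_of_subset hI]
      rw [hexp, hsd, hprodI]
      rw [hbd, pow_add]
      ring
    rw [h1, h2, Finset.prod_insert ha]
    ring


/-- The variable `X_i` in the polynomial ring `ℚ[X_1,…,X_ℓ,b_1,…,b_ℓ,q]`. -/
noncomputable def Xv (ℓ : ℕ) (i : Fin ℓ) : MvPolynomial (Fin ℓ ⊕ Fin ℓ ⊕ Unit) ℚ :=
  MvPolynomial.X (Sum.inl i)

/-- The variable `b_i` in the polynomial ring `ℚ[X_1,…,X_ℓ,b_1,…,b_ℓ,q]`. -/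
noncomputable def bv (ℓ : ℕ) (i : Fin ℓ) : MvPolynomial (Fin ℓ ⊕ Fin ℓ ⊕ Unit) ℚ :=
  MvPolynomial.X (Sum.inr (Sum.inl i))

/-- The variable `q` in the polynomial ring `ℚ[X_1,…,X_ℓ,b_1,…,b_ℓ,q]`. -/
noncomputable def qv (ℓ : ℕ) : MvPolynomial (Fin ℓ ⊕ Fin ℓ ⊕ Unit) ℚ :=
  MvPolynomial.X (Sum.inr (Sum.inr ()))

/-- the formal identity
`∑_{k=0}^{ℓ} q^{ℓ(ℓ+1)/2 - k(k+1)/2} ∑_{I={i_1<…<i_k}} (∏_{r∉I} b_r)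
 ∏_{j=1}^{k} (X_{i_j} - q^{(k-j)+i_j} b_{i_j}) = X_1 ⋯ X_ℓ`
in the polynomial ring over `ℚ` in the indeterminates `X_1,…,X_ℓ, b_1,…,b_ℓ, q`.
For `i ∈ I` at (1-based) position `j`, the exponent `(k-j)+i_j` equals
`#{x ∈ I : x > i} + (i+1)` where `i+1` is the 1-based index of `i`. -/
theorem formal_identity (ℓ : ℕ) :
    ∑ k ∈ Finset.range (ℓ + 1),
        (qv ℓ) ^ (ℓ * (ℓ + 1) / 2 - k * (k + 1) / 2) *
          ∑ I ∈ Finset.powersetCard k (Finset.univ : Finset (Fin ℓ)),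
            (∏ r ∈ Iᶜ, bv ℓ r) *
              ∏ i ∈ I,
                (Xv ℓ i - (qv ℓ) ^ ((I.filter (fun x => i < x)).card + i.val + 1) * bv ℓ i)
      = ∏ i : Fin ℓ, Xv ℓ i := by
  have h := key (qv ℓ) (Xv ℓ) (Finset.univ : Finset (Fin ℓ)) (bv ℓ)
  rw [Finset.sum_powerset] at h
  simp only [Finset.card_univ, Fintype.card_fin] at h
  rw [← h]
  apply Finset.sum_congr rfl
  intro k _
  rw [Finset.mul_sum]
  apply Finset.sum_congr rfl
  intro I hI
  have hIc : I.card = k := (Finset.mem_powersetCard.mp hI).2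
  have hcompl : (Finset.univ \ I : Finset (Fin ℓ)) = Iᶜ := by ext x; simp
  have hX : ∏ i ∈ I, (Xv ℓ i - (qv ℓ) ^ ((I.filter (fun x => i < x)).card
        + (Finset.filter (fun x => x ≤ i) Finset.univ).card) * bv ℓ i)
      = ∏ i ∈ I, (Xv ℓ i - (qv ℓ) ^ ((I.filter (fun x => i < x)).card + i.val + 1) * bv ℓ i) := by
    apply Finset.prod_congr rfl
    intro i _
    have hIic : (Finset.univ.filter (fun x => x ≤ i)) = Finset.Iic i := by ext x; simp
    rw [hIic, Fin.card_Iic, ← Nat.add_assoc]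
  rw [hIc]
  refine congrArg _ ?_
  refine congrArg₂ _ ?_ ?_
  · apply Finset.prod_congr _ (fun _ _ => rfl)
    ext x; simp
  · apply Finset.prod_congr rfl
    intro i _
    have hIic : ∀ inst, @Finset.filter (Fin ℓ) (fun x => x ≤ i) inst Finset.univ = Finset.Iic i := by
      intro inst; ext x; simp
    rw [hIic, Fin.card_Iic, ← Nat.add_assoc]
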